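/- Let n ≥ 3 and set s_2^n := ∑_{i=2}^{n} 1/i, p̃_n := 2 + 4/(n + 1 + s_2^n), and p_n := 2(n+1)[(n+2)p̃_n − 2(n+3)] / [(n+1)n·p̃_n − 2(n² + 2n − 1)]. Then 2(n+1)/n < p_n < 2(n+3)/(n+1). -/

import Mathlib

theorem stmt13 (n : ℕ) (hn : 3 ≤ n)
    (s pt pn : ℝ)
    (hs : s = ∑ i ∈ Finset.Icc 2 n, (1 : ℝ) / i)
    (hpt : pt = 2 + 4 / ((n : ℝ) + 1 + s))
    (hpn : pn = 2 * ((n : ℝ) + 1) * (((n : ℝ) + 2) * pt - 2 * ((n : ℝ) + 3)) /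
      (((n : ℝ) + 1) * (n : ℝ) * pt - 2 * ((n : ℝ) ^ 2 + 2 * (n : ℝ) - 1))) :
    2 * ((n : ℝ) + 1) / (n : ℝ) < pn ∧ pn < 2 * ((n : ℝ) + 3) / ((n : ℝ) + 1) := by
  have hN : (3 : ℝ) ≤ (n : ℝ) := by exact_mod_cast hn
  have hs_pos : 0 < s := by
    rw [hs]
    apply Finset.sum_pos
    · intro i hi
      simp only [Finset.mem_Icc] at hi
      have : (0 : ℝ) < i := by exact_mod_cast (by omega : 0 < i)
      positivity
    · exact Finset.nonempty_Icc.mpr (by omega)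
  have hs_le : s ≤ ((n : ℝ) - 1) / 2 := by
    have h1 : s ≤ (Finset.Icc 2 n).card • ((1 : ℝ) / 2) := by
      rw [hs]
      apply Finset.sum_le_card_nsmul
      intro i hi
      simp only [Finset.mem_Icc] at hi
      have h2 : (2 : ℝ) ≤ i := by exact_mod_cast hi.1
      rw [div_le_div_iff₀ (by linarith) (by norm_num)]
      linarith
    have hcard : (Finset.Icc 2 n).card = n - 1 := by
      rw [Nat.card_Icc]; omega
    rw [hcard, nsmul_eq_mul] at h1
    have : ((n - 1 : ℕ) : ℝ) = (n : ℝ) - 1 := by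
      have : (1 : ℕ) ≤ n := by omega
      push_cast [this]; ring
    rw [this] at h1
    linarith
  have hs_lt : s < (n : ℝ) - 1 := by linarith
  have ht : (0 : ℝ) < (n : ℝ) + 1 + s := by linarith
  set u : ℝ := 4 / ((n : ℝ) + 1 + s) with hu_def
  have hu : u * ((n : ℝ) + 1 + s) = 4 := div_mul_cancel₀ _ (ne_of_gt ht)
  have hu_pos : 0 < u := by positivity
  have hpt' : pt = 2 + u := hpt
  have hnu : 2 < (n : ℝ) * u := by
    nlinarith [mul_lt_mul_of_pos_left hs_lt hu_pos]
  have hus : 0 < u * s := mul_pos hu_pos hs_pos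
  have hD : 0 < ((n : ℝ) + 1) * (n : ℝ) * pt - 2 * ((n : ℝ) ^ 2 + 2 * (n : ℝ) - 1) := by
    rw [hpt']
    nlinarith [hnu]
  rw [hpn]
  constructor
  · rw [div_lt_div_iff₀ (by linarith : (0 : ℝ) < (n : ℝ)) hD, hpt']
    nlinarith [mul_pos (show (0 : ℝ) < (n : ℝ) + 1 by linarith) (sub_pos.mpr hnu)]
  · rw [div_lt_div_iff₀ hD (by linarith : (0 : ℝ) < (n : ℝ) + 1), hpt']
    nlinarith [hus]
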